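/- Let V be a real vector space with a symmetric bilinear form of signature (1,n), and let FP be a connected component of the positive cone. If A ∈ FP and B is a nonzero element of the closure of FP, then A·B > 0. -/

import Mathlib

noncomputable def mform (n : ℕ) (x y : Fin (n+1) → ℝ) : ℝ :=
  x 0 * y 0 - ∑ i : Fin n, x i.succ * y i.succ

noncomputable def tl (n : ℕ) (y : Fin (n+1) → ℝ) : EuclideanSpace ℝ (Fin n) :=
  WithLp.toLp 2 (fun i => y i.succ)

lemma mform_eq (n : ℕ) (x y : Fin (n+1) → ℝ) :
    mform n x y = x 0 * y 0 - (inner ℝ (tl n x) (tl n y) : ℝ) := by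
  simp [mform, tl, PiLp.inner_apply, RCLike.inner_apply, mul_comm]

lemma tl_continuous (n : ℕ) : Continuous (tl n) :=
  ((EuclideanSpace.equiv (Fin n) ℝ).symm.continuous).comp
    (continuous_pi fun i => continuous_apply i.succ)

lemma mform_self (n : ℕ) (x : Fin (n+1) → ℝ) :
    mform n x x = x 0 * x 0 - ‖tl n x‖ ^ 2 := by
  rw [mform_eq, real_inner_self_eq_norm_sq]

/-- The positive cone splits as the union of the forward and backward cones. -/
lemma cone_union (n : ℕ) (y : Fin (n+1) → ℝ) :
    0 < mform n y y ↔ (‖tl n y‖ < y 0 ∨ y 0 < -‖tl n y‖) := by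
  rw [mform_self]
  have h0 : (0:ℝ) ≤ ‖tl n y‖ := norm_nonneg _
  constructor
  · intro h
    rcases le_or_gt 0 (y 0) with h1 | h1
    · left; nlinarith
    · right; nlinarith
  · rintro (h | h) <;> nlinarith

lemma convexP (n : ℕ) : Convex ℝ {y : Fin (n+1) → ℝ | ‖tl n y‖ < y 0} := by
  intro y hy z hz a b ha hb hab
  have h : tl n (a • y + b • z) = a • tl n y + b • tl n z := rfl
  simp only [Set.mem_setOf_eq] at hy hz ⊢
  calc ‖tl n (a • y + b • z)‖ ≤ a * ‖tl n y‖ + b * ‖tl n z‖ := by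
        rw [h]
        refine (norm_add_le _ _).trans ?_
        rw [norm_smul, norm_smul, Real.norm_eq_abs, Real.norm_eq_abs,
          abs_of_nonneg ha, abs_of_nonneg hb]
    _ < a * y 0 + b * z 0 := by
        rcases eq_or_lt_of_le ha with rfl | ha'
        · simp only [zero_add] at hab; subst hab; simpa using hz
        · rcases eq_or_lt_of_le hb with rfl | hb'
          · simp only [add_zero] at hab; subst hab; simpa using hy
          · have := mul_lt_mul_of_pos_left hy ha'
            have := mul_lt_mul_of_pos_left hz hb'
            linarith
    _ = (a • y + b • z) 0 := by simp [mul_comm]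

lemma convexN (n : ℕ) : Convex ℝ {y : Fin (n+1) → ℝ | y 0 < -‖tl n y‖} := by
  have hP := convexP n
  have hmap : {y : Fin (n+1) → ℝ | y 0 < -‖tl n y‖}
      = (fun y : Fin (n+1) → ℝ => -y) ⁻¹' {y | ‖tl n y‖ < y 0} := by
    ext y
    have h : tl n (-y) = -tl n y := rfl
    simp only [Set.mem_setOf_eq, Set.mem_preimage, h, norm_neg, Pi.neg_apply]
    constructor <;> intro <;> linarith
  rw [hmap]
  intro y hy z hz a b ha hb hab
  have heq : -(a • y + b • z) = a • (-y) + b • (-z) := by module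
  have h2 := hP hy hz ha hb hab
  show -(a • y + b • z) ∈ {y | ‖tl n y‖ < y 0}
  rw [heq]
  exact h2

lemma openP (n : ℕ) : IsOpen {y : Fin (n+1) → ℝ | ‖tl n y‖ < y 0} :=
  isOpen_lt (continuous_norm.comp (tl_continuous n)) (continuous_apply 0)

lemma openN (n : ℕ) : IsOpen {y : Fin (n+1) → ℝ | y 0 < -‖tl n y‖} :=
  isOpen_lt (continuous_apply 0) (continuous_neg.comp (continuous_norm.comp (tl_continuous n)))

lemma disjPN (n : ℕ) : Disjoint {y : Fin (n+1) → ℝ | ‖tl n y‖ < y 0}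
    {y : Fin (n+1) → ℝ | y 0 < -‖tl n y‖} := by
  rw [Set.disjoint_left]
  intro y hy hy'
  simp only [Set.mem_setOf_eq] at hy hy'
  have := norm_nonneg (tl n y)
  linarith

/-- Characterization of components of the positive cone. -/
lemma comp_char (n : ℕ) (x₀ : Fin (n+1) → ℝ) (U W : Set (Fin (n+1) → ℝ))
    (hU : IsOpen U) (hW : IsOpen W) (hUc : Convex ℝ U) (hd : Disjoint U W)
    (hS : {y : Fin (n+1) → ℝ | 0 < mform n y y} = U ∪ W) (hx : x₀ ∈ U) :
    connectedComponentIn {y : Fin (n+1) → ℝ | 0 < mform n y y} x₀ = U := by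
  have hx' : x₀ ∈ {y : Fin (n+1) → ℝ | 0 < mform n y y} := by rw [hS]; exact Or.inl hx
  apply le_antisymm
  · refine (isPreconnected_connectedComponentIn).subset_left_of_subset_union hU hW hd
      (by rw [← hS]; exact connectedComponentIn_subset _ _)
      ⟨x₀, mem_connectedComponentIn hx', hx⟩
  · exact hUc.isPreconnected.subset_connectedComponentIn hx (by rw [hS]; exact Set.subset_union_left)

lemma closure_sub (n : ℕ) :
    closure {y : Fin (n+1) → ℝ | ‖tl n y‖ < y 0} ⊆ {y : Fin (n+1) → ℝ | ‖tl n y‖ ≤ y 0} :=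
  closure_minimal (Set.setOf_subset_setOf.mpr fun y => le_of_lt)
    (isClosed_le (continuous_norm.comp (tl_continuous n)) (continuous_apply 0))

lemma closure_subN (n : ℕ) :
    closure {y : Fin (n+1) → ℝ | y 0 < -‖tl n y‖} ⊆ {y : Fin (n+1) → ℝ | y 0 ≤ -‖tl n y‖} :=
  closure_minimal (Set.setOf_subset_setOf.mpr fun y => le_of_lt)
    (isClosed_le (continuous_apply 0)
      (continuous_neg.comp (continuous_norm.comp (tl_continuous n))))

lemma eq_zero_of (n : ℕ) (B : Fin (n+1) → ℝ) (h0 : B 0 = 0) (ht : tl n B = 0) : B = 0 := by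
  funext i
  refine Fin.cases ?_ (fun j => ?_) i
  · exact h0
  · exact congrArg (fun v => v j) ht

/-- Strengthened Light Cone Lemma: if A lies in a component FP of the positive
cone and B is a nonzero element of the closure of FP, then A·B > 0. -/
theorem stmt4 (n : ℕ) (FP : Set (Fin (n+1) → ℝ)) (x₀ : Fin (n+1) → ℝ)
    (hx₀ : 0 < mform n x₀ x₀)
    (hFP : FP = connectedComponentIn {y | 0 < mform n y y} x₀)
    (A B : Fin (n+1) → ℝ)
    (hA : A ∈ FP) (hB : B ∈ closure FP) (hB0 : B ≠ 0) :
    0 < mform n A B := by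
  set P := {y : Fin (n+1) → ℝ | ‖tl n y‖ < y 0} with hPdef
  set N := {y : Fin (n+1) → ℝ | y 0 < -‖tl n y‖} with hNdef
  have hS : {y : Fin (n+1) → ℝ | 0 < mform n y y} = P ∪ N := by
    ext y; simpa [hPdef, hNdef] using cone_union n y
  have hCS := real_inner_le_norm (tl n A) (tl n B)
  have hnA : (0:ℝ) ≤ ‖tl n A‖ := norm_nonneg _
  have hnB : (0:ℝ) ≤ ‖tl n B‖ := norm_nonneg _
  rcases (cone_union n x₀).mp hx₀ with hx | hx
  · -- forward cone
    have hFPeq : FP = P := by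
      rw [hFP]; exact comp_char n x₀ P N (openP n) (openN n) (convexP n) (disjPN n) hS hx
    rw [hFPeq] at hA hB
    have hA' : ‖tl n A‖ < A 0 := hA
    have hB' : ‖tl n B‖ ≤ B 0 := closure_sub n hB
    have hBpos : 0 < B 0 := by
      rcases lt_or_eq_of_le (le_trans hnB hB') with h | h
      · exact h
      · exfalso
        apply hB0
        apply eq_zero_of n B h.symm
        have : ‖tl n B‖ = 0 := le_antisymm (h ▸ hB') hnB
        exact norm_eq_zero.mp this
    rw [mform_eq]
    nlinarith
  · -- backward cone
    have hS' : {y : Fin (n+1) → ℝ | 0 < mform n y y} = N ∪ P := by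
      rw [hS, Set.union_comm]
    have hFPeq : FP = N := by
      rw [hFP]
      exact comp_char n x₀ N P (openN n) (openP n) (convexN n) (disjPN n).symm hS' hx
    rw [hFPeq] at hA hB
    have hA' : A 0 < -‖tl n A‖ := hA
    have hB' : B 0 ≤ -‖tl n B‖ := closure_subN n hB
    have hBneg : B 0 < 0 := by
      rcases lt_or_eq_of_le hB' with h | h
      · linarith [hnB]
      · by_contra hge
        have hB00 : B 0 = 0 := by
          push_neg at hge
          nlinarith
        apply hB0
        apply eq_zero_of n B hB00
        have : ‖tl n B‖ = 0 := by nlinarith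
        exact norm_eq_zero.mp this
    rw [mform_eq]
    nlinarith
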